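/- For every real c ≥ 0 and every integer τ ≥ 1, the cumulative bonus β̃_τ = Σ_{i=1}^{τ} α_τ^i · (c/√i) satisfies c/√τ ≤ β̃_τ ≤ 2c/√τ. -/

import Mathlib

open Finset

/-- The learning rate `α_τ = (H+1)/(H+τ)`. -/
noncomputable def lr (H : ℝ) (τ : ℕ) : ℝ := (H + 1) / (H + τ)

/-- The coefficients `α_τ^i`. -/
noncomputable def acoef (H : ℝ) (τ i : ℕ) : ℝ :=
  if i = 0 then ∏ j ∈ Finset.Icc 1 τ, (1 - lr H j)
  else lr H i * ∏ j ∈ Finset.Icc (i + 1) τ, (1 - lr H j)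

lemma lr_nonneg {H : ℝ} (hH : 1 ≤ H) (i : ℕ) : 0 ≤ lr H i := by
  have : (0:ℝ) ≤ i := Nat.cast_nonneg i
  unfold lr
  apply div_nonneg <;> linarith

lemma lr_le_one {H : ℝ} (hH : 1 ≤ H) {i : ℕ} (hi : 1 ≤ i) : lr H i ≤ 1 := by
  have h1 : (1:ℝ) ≤ i := by exact_mod_cast hi
  unfold lr
  rw [div_le_one (by linarith)]
  linarith

lemma lr_one {H : ℝ} (hH : 1 ≤ H) : lr H 1 = 1 := by
  unfold lr
  norm_num
  exact ne_of_gt (by linarith)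

lemma acoef_nonneg {H : ℝ} (hH : 1 ≤ H) (τ : ℕ) {i : ℕ} (hi : 1 ≤ i) :
    0 ≤ acoef H τ i := by
  unfold acoef
  rw [if_neg (by omega)]
  apply mul_nonneg (lr_nonneg hH i)
  apply Finset.prod_nonneg
  intro j hj
  simp only [Finset.mem_Icc] at hj
  have := lr_le_one hH (i := j) (by omega)
  linarith

lemma sum_rec (H : ℝ) (g : ℕ → ℝ) (τ : ℕ) :
    ∑ i ∈ Icc 1 (τ+1), acoef H (τ+1) i * g i
      = (1 - lr H (τ+1)) * (∑ i ∈ Icc 1 τ, acoef H τ i * g i) + lr H (τ+1) * g (τ+1) := by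
  have h1 : Icc 1 (τ+1) = insert (τ+1) (Icc 1 τ) := by
    rw [Finset.insert_Icc_right_eq_Icc_add_one (by omega)]
  rw [h1, Finset.sum_insert (by simp), Finset.mul_sum]
  have hlast : acoef H (τ+1) (τ+1) = lr H (τ+1) := by
    unfold acoef
    rw [if_neg (by omega)]
    rw [Finset.Icc_eq_empty (by omega), Finset.prod_empty, mul_one]
  rw [hlast]
  rw [add_comm]
  congr 1
  apply Finset.sum_congr rfl
  intro i hi
  simp only [Finset.mem_Icc] at hi
  have h2 : Icc (i+1) (τ+1) = insert (τ+1) (Icc (i+1) τ) := by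
    rw [Finset.insert_Icc_right_eq_Icc_add_one (by omega)]
  unfold acoef
  rw [if_neg (by omega), if_neg (by omega), h2,
    Finset.prod_insert (by simp)]
  ring

lemma sum_one {H : ℝ} (hH : 1 ≤ H) : ∀ τ : ℕ, 1 ≤ τ →
    ∑ i ∈ Icc 1 τ, acoef H τ i = 1 := by
  intro τ hτ
  induction τ, hτ using Nat.le_induction with
  | base =>
    simp [acoef, lr_one hH]
  | succ n hn ih =>
    have := sum_rec H (fun _ => 1) n
    simp only [mul_one] at this
    rw [this, ih]
    ring

lemma upper_aux {H : ℝ} (hH : 1 ≤ H) : ∀ τ : ℕ, 1 ≤ τ →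
    ∑ i ∈ Icc 1 τ, acoef H τ i * (1 / Real.sqrt i) ≤ 2 / Real.sqrt τ := by
  intro τ hτ
  induction τ, hτ using Nat.le_induction with
  | base =>
    simp [acoef, lr_one hH]
  | succ n hn ih =>
    rw [sum_rec]
    have hn1 : (1:ℝ) ≤ (n:ℝ) := by exact_mod_cast hn
    set s := Real.sqrt n with hs_def
    set t := Real.sqrt (n+1) with ht_def
    have hs : 0 < s := Real.sqrt_pos.mpr (by linarith)
    have ht : 0 < t := Real.sqrt_pos.mpr (by linarith)
    have hs2 : s^2 = n := Real.sq_sqrt (by linarith)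
    have ht2 : t^2 = n+1 := by
      rw [ht_def]
      exact Real.sq_sqrt (by linarith)
    have hα : lr H (n+1) = (H+1)/(H+n+1) := by
      unfold lr
      push_cast
      ring_nf
    have hD : (0:ℝ) < H + n + 1 := by linarith
    have hα0 : 0 ≤ lr H (n+1) := lr_nonneg hH _
    have hα1 : lr H (n+1) ≤ 1 := lr_le_one hH (by omega)
    have step1 : (1 - lr H (n+1)) * (∑ i ∈ Icc 1 n, acoef H n i * (1 / Real.sqrt i))
        ≤ (1 - lr H (n+1)) * (2 / s) := by
      apply mul_le_mul_of_nonneg_left ih (by linarith)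
    have hst : s * t ≤ s^2 + 1/2 := by
      nlinarith [mul_pos hs ht, sq_nonneg (s - t), sq_nonneg (s + t)]
    have hcast : ((n:ℝ)+1) = ((n+1 : ℕ) : ℝ) := by push_cast; ring
    have step2 : (1 - lr H (n+1)) * (2 / s) + lr H (n+1) * (1 / t) ≤ 2 / t := by
      rw [hα]
      rw [← hs2, ← sub_nonneg]
      have heq : 2/t - ((1 - (H+1)/(H+s^2+1)) * (2/s) + (H+1)/(H+s^2+1) * (1/t))
          = (2*(H+s^2+1) - 2*s*t - (H+1)) / ((H+s^2+1)*s*t) * s := by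
        field_simp
        ring
      rw [heq]
      apply mul_nonneg _ hs.le
      apply div_nonneg
      · nlinarith [hst]
      · positivity
    calc (1 - lr H (n+1)) * (∑ i ∈ Icc 1 n, acoef H n i * (1 / Real.sqrt i))
          + lr H (n+1) * (1 / Real.sqrt (n+1:ℕ))
        ≤ (1 - lr H (n+1)) * (2 / s) + lr H (n+1) * (1 / t) := by
          apply add_le_add step1
          apply le_of_eq
          congr 2
          rw [ht_def]
          congr 1
          push_cast; ring
      _ ≤ 2 / t := step2
      _ = 2 / Real.sqrt (n+1:ℕ) := by rw [ht_def]; congr 1; push_cast; ring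

theorem stmt_15 (H : ℝ) (hH : 1 ≤ H) (c : ℝ) (hc : 0 ≤ c) (τ : ℕ) (hτ : 1 ≤ τ) :
    c / Real.sqrt τ ≤ ∑ i ∈ Finset.Icc 1 τ, acoef H τ i * (c / Real.sqrt i) ∧
    ∑ i ∈ Finset.Icc 1 τ, acoef H τ i * (c / Real.sqrt i) ≤ 2 * c / Real.sqrt τ := by
  have hτ1 : (1:ℝ) ≤ (τ:ℝ) := by exact_mod_cast hτ
  have hsτ : 0 < Real.sqrt τ := Real.sqrt_pos.mpr (by linarith)
  constructor
  · calc c / Real.sqrt τ = ∑ i ∈ Icc 1 τ, acoef H τ i * (c / Real.sqrt τ) := by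
          rw [← Finset.sum_mul, sum_one hH τ hτ, one_mul]
      _ ≤ ∑ i ∈ Icc 1 τ, acoef H τ i * (c / Real.sqrt i) := by
          apply Finset.sum_le_sum
          intro i hi
          simp only [Finset.mem_Icc] at hi
          have hi1 : (1:ℝ) ≤ (i:ℝ) := by exact_mod_cast hi.1
          have hsi : 0 < Real.sqrt i := Real.sqrt_pos.mpr (by linarith)
          have hle : Real.sqrt i ≤ Real.sqrt τ :=
            Real.sqrt_le_sqrt (by exact_mod_cast hi.2)
          apply mul_le_mul_of_nonneg_left _ (acoef_nonneg hH τ hi.1)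
          exact div_le_div_of_nonneg_left hc hsi hle
  · calc ∑ i ∈ Icc 1 τ, acoef H τ i * (c / Real.sqrt i)
        = c * ∑ i ∈ Icc 1 τ, acoef H τ i * (1 / Real.sqrt i) := by
          rw [Finset.mul_sum]
          apply Finset.sum_congr rfl
          intros; ring
      _ ≤ c * (2 / Real.sqrt τ) :=
          mul_le_mul_of_nonneg_left (upper_aux hH τ hτ) hc
      _ = 2 * c / Real.sqrt τ := by ring
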